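/- A priori error estimate in the W-norm (abstract form of Theorem 4.2): Let V_h ⊆ V be a closed subspace, let u ∈ V satisfy a(u,v) = l(v) for all v ∈ V, and let u_h ∈ V_h satisfy a(u_h, v_h) = l(v_h) for all v_h ∈ V_h. Suppose there exist constants c > 0, M ≥ 0, h > 0 and a real number m > 1 such that ‖u − u_h‖_V ≤ c h^{m−1} M. Suppose further that for every w ∈ W there exists a solution v_w ∈ V of the dual problem a(φ, v_w) = ⟨w, ι(φ)⟩_W for all φ ∈ V, and that there is a constant D ≥ 0 with inf_{v_h ∈ V_h} ‖v_w − v_h‖_V ≤ D h ‖w‖_W for every w ∈ W. Then ‖ι(u) − ι(u_h)‖_W ≤ γ c D h^m M. -/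

import Mathlib

theorem a_priori_error_estimate_W_norm
    {V : Type*} [NormedAddCommGroup V] [InnerProductSpace ℝ V] [CompleteSpace V]
    (a : V →ₗ[ℝ] V →ₗ[ℝ] ℝ) (l : V →L[ℝ] ℝ)
    (γ α : ℝ) (hγ : 0 < γ) (hα : 0 < α)
    (ha_symm : ∀ u v : V, a u v = a v u)
    (ha_cont : ∀ u v : V, |a u v| ≤ γ * ‖u‖ * ‖v‖)
    (ha_coer : ∀ u : V, α * ‖u‖ ^ 2 ≤ a u u)
    {W : Type*} [NormedAddCommGroup W] [InnerProductSpace ℝ W] [CompleteSpace W]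
    (ι : V →L[ℝ] W) (hι : Function.Injective ι)
    (Vh : Submodule ℝ V) (hVh : IsClosed (Vh : Set V))
    (u : V) (hu : ∀ v : V, a u v = l v)
    (uh : V) (huh : uh ∈ Vh) (huh_sol : ∀ vh ∈ Vh, a uh vh = l vh)
    (c M h m : ℝ) (hc : 0 < c) (hM : 0 ≤ M) (hh : 0 < h) (hm : 1 < m)
    (herr : ‖u - uh‖ ≤ c * h ^ (m - 1) * M)
    (vw : W → V) (hvw : ∀ w : W, ∀ φ : V, a φ (vw w) = (inner ℝ w (ι φ) : ℝ))
    (D : ℝ) (hD : 0 ≤ D)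
    (hbound : ∀ w : W, (⨅ vh : Vh, ‖vw w - (vh : V)‖) ≤ D * h * ‖w‖) :
    ‖ι u - ι uh‖ ≤ γ * c * D * h ^ m * M := by
  set e := u - uh with he
  have hιe : ι u - ι uh = ι e := (map_sub ι u uh).symm
  rw [hιe]
  set w := ι e with hw
  -- Galerkin orthogonality
  have horth : ∀ vh ∈ Vh, a e vh = 0 := by
    intro vh hvh
    have : a e vh = a u vh - a uh vh := by
      simp [he, map_sub]
    rw [this, hu vh, huh_sol vh hvh, sub_self]
  -- key identity
  have hkey : ∀ vh ∈ Vh, ‖w‖ ^ 2 = a e (vw w - vh) := by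
    intro vh hvh
    have h1 : a e (vw w) = (inner ℝ w (ι e) : ℝ) := hvw w e
    have h2 : (inner ℝ w (ι e) : ℝ) = ‖w‖ ^ 2 := by
      rw [← hw, real_inner_self_eq_norm_sq]
    rw [map_sub, horth vh hvh, sub_zero, h1, h2]
  have hbnd : ∀ vh ∈ Vh, ‖w‖ ^ 2 ≤ γ * ‖e‖ * ‖vw w - vh‖ := by
    intro vh hvh
    calc ‖w‖ ^ 2 = a e (vw w - vh) := hkey vh hvh
    _ ≤ |a e (vw w - vh)| := le_abs_self _
    _ ≤ γ * ‖e‖ * ‖vw w - vh‖ := ha_cont e _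
  -- pass to infimum
  have hinf : ‖w‖ ^ 2 ≤ γ * ‖e‖ * (⨅ vh : Vh, ‖vw w - (vh : V)‖) := by
    have hγe : 0 ≤ γ * ‖e‖ := by positivity
    rcases eq_or_lt_of_le hγe with heq | hlt
    · have h0 : ‖w‖ ^ 2 ≤ 0 := by
        have := hbnd uh huh
        rw [← heq] at this
        simpa using this
      nlinarith [hbound w, norm_nonneg w, mul_nonneg (mul_nonneg hD hh.le) (norm_nonneg w)]
    · rw [mul_comm]
      rw [← div_le_iff₀ hlt]
      apply le_ciInf
      intro vh
      rw [div_le_iff₀ hlt]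
      calc ‖w‖ ^ 2 ≤ γ * ‖e‖ * ‖vw w - (vh : V)‖ := hbnd vh vh.2
      _ = ‖vw w - (vh : V)‖ * (γ * ‖e‖) := by ring
  have h3 : ‖w‖ ^ 2 ≤ γ * ‖e‖ * (D * h * ‖w‖) := by
    calc ‖w‖ ^ 2 ≤ γ * ‖e‖ * (⨅ vh : Vh, ‖vw w - (vh : V)‖) := hinf
    _ ≤ γ * ‖e‖ * (D * h * ‖w‖) := by
        apply mul_le_mul_of_nonneg_left (hbound w) (by positivity)
  have hpow : h ^ (m - 1) * h ^ (1:ℝ) = h ^ m := by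
    rw [← Real.rpow_add hh]
    norm_num
  rcases eq_or_lt_of_le (norm_nonneg w) with h0 | h0
  · rw [← h0]
    have : 0 ≤ h ^ m := Real.rpow_nonneg hh.le m
    positivity
  · have h4 : ‖w‖ ≤ γ * ‖e‖ * (D * h) := by
      have := h3
      rw [pow_two] at this
      nlinarith
    calc ‖w‖ ≤ γ * ‖e‖ * (D * h) := h4
    _ ≤ γ * (c * h ^ (m - 1) * M) * (D * h) := by
        apply mul_le_mul_of_nonneg_right _ (by positivity)
        exact mul_le_mul_of_nonneg_left herr hγ.le
    _ = γ * c * D * (h ^ (m - 1) * h ^ (1:ℝ)) * M := by rw [Real.rpow_one]; ring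
    _ = γ * c * D * h ^ m * M := by rw [hpow]
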